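/- Let m > 0 and let φ : [0,T] → [0,∞) be continuous, D : [0,T] → [0,∞) integrable, and K ≥ 0, such that for all 0 ≤ s < t ≤ T, φ(t) + ∫_s^t D(τ) dτ ≤ C(φ(s) + K). Then sup_{t∈[0,T]} t^m φ(t) + ∫_0^T s^m D(s) ds ≤ C' ( ∫_0^T s^{m−1} φ(s) ds + K T^{m+1} + K T^m ), with C' depending only on C and m. -/

import Mathlib

open Set MeasureTheory intervalIntegral

/-- `∫_{(0,t)} s^{m-1} ds = t^m / m` for `m > 0`, `t ≥ 0`. -/
lemma aux_Ioo_rpow (m : ℝ) (hm : 0 < m) {t : ℝ} (ht : 0 ≤ t) :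
    ∫ s in Ioo (0:ℝ) t, s ^ (m - 1) = t ^ m / m := by
  rw [← MeasureTheory.integral_Ioc_eq_integral_Ioo, ← integral_of_le ht,
    integral_rpow (Or.inl (by linarith : (-1:ℝ) < m - 1))]
  have h1 : m - 1 + 1 = m := by ring
  rw [h1, Real.zero_rpow hm.ne']
  ring

/-- Interval integral of a pointwise-nonnegative function is nonnegative. -/
lemma intervalIntegral_nonneg_AUX {f : ℝ → ℝ} {a b : ℝ} (hab : a ≤ b)
    (hf : ∀ u ∈ Icc a b, 0 ≤ f u) : 0 ≤ ∫ u in a..b, f u :=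
  integral_nonneg hab hf

/-- Time-weighted smoothing estimate: if `φ(t) + ∫_s^t D ≤ C (φ(s) + K)` for all
`0 ≤ s < t ≤ T`, then `sup_t t^m φ(t) + ∫_0^T s^m D(s) ds` is controlled by
`C' (∫_0^T s^{m-1} φ(s) ds + K T^{m+1} + K T^m)` with `C'` depending only on `C` and `m`. -/
theorem stmt_14 (C m : ℝ) (hC : 0 < C) (hm : 0 < m) :
    ∃ C' : ℝ, 0 < C' ∧
      ∀ (T : ℝ) (φ D : ℝ → ℝ) (K : ℝ),
        0 < T → 0 ≤ K →
        ContinuousOn φ (Icc 0 T) →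
        (∀ t ∈ Icc (0:ℝ) T, 0 ≤ φ t) →
        (∀ t ∈ Icc (0:ℝ) T, 0 ≤ D t) →
        IntegrableOn D (Icc 0 T) →
        (∀ s t : ℝ, 0 ≤ s → s < t → t ≤ T →
          φ t + ∫ τ in s..t, D τ ≤ C * (φ s + K)) →
        (∀ t ∈ Icc (0:ℝ) T, t ^ m * φ t
            ≤ C' * ((∫ s in (0:ℝ)..T, s ^ (m - 1) * φ s) + K * T ^ (m + 1) + K * T ^ m)) ∧
          (∫ s in (0:ℝ)..T, s ^ m * D s)
            ≤ C' * ((∫ s in (0:ℝ)..T, s ^ (m - 1) * φ s) + K * T ^ (m + 1) + K * T ^ m) := by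
  refine ⟨C * (m + 1), by positivity, ?_⟩
  intro T φ D K hT hK hφc hφ0 hD0 hDint hmain
  have hm0 : m ≠ 0 := hm.ne'
  have hT0 : (0:ℝ) ≤ T := hT.le
  have huIcc : uIcc (0:ℝ) T = Icc 0 T := uIcc_of_le hT0
  have hsm : IntervalIntegrable (fun s : ℝ => s ^ (m - 1)) volume 0 T :=
    intervalIntegrable_rpow' (by linarith)
  have hφI : IntervalIntegrable (fun s => s ^ (m - 1) * φ s) volume 0 T :=
    hsm.mul_continuousOn (huIcc ▸ hφc)
  set I := ∫ s in (0:ℝ)..T, s ^ (m - 1) * φ s with hIdef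
  have hInn : 0 ≤ I := by
    apply intervalIntegral_nonneg_AUX hT0
    intro u hu
    exact mul_nonneg (Real.rpow_nonneg hu.1 _) (hφ0 u hu)
  have hIoo : ∫ s in Ioo (0:ℝ) T, s ^ (m - 1) * φ s = I := by
    rw [hIdef, integral_of_le hT0, MeasureTheory.integral_Ioc_eq_integral_Ioo]
  have hTm : 0 ≤ T ^ m := Real.rpow_nonneg hT0 _
  have hTm1 : 0 ≤ T ^ (m + 1) := Real.rpow_nonneg hT0 _
  have hfin : ∀ X : ℝ, X ≤ C * m * I + C * K * T ^ m →
      X ≤ C * (m + 1) * (I + K * T ^ (m + 1) + K * T ^ m) := by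
    intro X hX
    nlinarith [mul_nonneg hC.le hInn, mul_nonneg hC.le (mul_nonneg hK hTm1),
      mul_nonneg (mul_nonneg hC.le hm.le) (mul_nonneg hK hTm)]
  -- Part 1
  have part1 : ∀ t ∈ Icc (0:ℝ) T, t ^ m * φ t ≤ C * m * I + C * K * T ^ m := by
    intro t ht
    rcases eq_or_lt_of_le ht.1 with h0 | h0
    · rw [← h0, Real.zero_rpow hm0, zero_mul]
      have h1 : 0 ≤ C * m * I := mul_nonneg (mul_nonneg hC.le hm.le) hInn
      have h2 : 0 ≤ C * K * T ^ m := mul_nonneg (mul_nonneg hC.le hK) hTm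
      linarith
    · have htT := ht.2
      have hsmt : IntervalIntegrable (fun s : ℝ => s ^ (m - 1)) volume 0 t :=
        intervalIntegrable_rpow' (by linarith)
      have hφct : ContinuousOn φ (uIcc (0:ℝ) t) := by
        rw [uIcc_of_le h0.le]
        exact hφc.mono (Icc_subset_Icc_right htT)
      have hφIt : IntervalIntegrable (fun s => s ^ (m - 1) * φ s) volume 0 t :=
        hsmt.mul_continuousOn hφct
      have hgt : IntervalIntegrable (fun s => s ^ (m - 1) * (C * (φ s + K))) volume 0 t :=
        hsmt.mul_continuousOn (continuousOn_const.mul (hφct.add continuousOn_const))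
      have hmono : ∫ s in Ioo (0:ℝ) t, s ^ (m - 1) * φ t
          ≤ ∫ s in Ioo (0:ℝ) t, s ^ (m - 1) * (C * (φ s + K)) := by
        refine setIntegral_mono_on
          ((hsmt.1.mono_set Ioo_subset_Ioc_self).mul_const _)
          (hgt.1.mono_set Ioo_subset_Ioc_self) measurableSet_Ioo ?_
        intro s hs
        have hφt : φ t ≤ C * (φ s + K) := by
          have h := hmain s t hs.1.le hs.2 htT
          have hD : 0 ≤ ∫ τ in s..t, D τ :=
            intervalIntegral_nonneg_AUX hs.2.le
              (fun u hu => hD0 u ⟨le_trans hs.1.le hu.1, le_trans hu.2 htT⟩)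
          linarith
        exact mul_le_mul_of_nonneg_left hφt (Real.rpow_nonneg hs.1.le _)
      have hL : ∫ s in Ioo (0:ℝ) t, s ^ (m - 1) * φ t = t ^ m / m * φ t := by
        rw [MeasureTheory.integral_mul_const, aux_Ioo_rpow m hm h0.le]
      have hsplit : ∫ s in Ioo (0:ℝ) t, s ^ (m - 1) * (C * (φ s + K))
          = C * (∫ s in Ioo (0:ℝ) t, s ^ (m - 1) * φ s) + C * K * (t ^ m / m) := by
        have he : (fun s : ℝ => s ^ (m - 1) * (C * (φ s + K)))
            = fun s : ℝ => C * (s ^ (m - 1) * φ s) + (C * K) * s ^ (m - 1) := by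
          funext s; ring
        rw [he, MeasureTheory.integral_add
            ((hφIt.1.mono_set Ioo_subset_Ioc_self).const_mul C)
            ((hsmt.1.mono_set Ioo_subset_Ioc_self).const_mul (C * K)),
          MeasureTheory.integral_const_mul, MeasureTheory.integral_const_mul,
          aux_Ioo_rpow m hm h0.le]
      have hIle : ∫ s in Ioo (0:ℝ) t, s ^ (m - 1) * φ s ≤ I := by
        rw [← hIoo]
        refine setIntegral_mono_set (hφI.1.mono_set Ioo_subset_Ioc_self) ?_
          ((Ioo_subset_Ioo_right htT).eventuallyLE)
        filter_upwards [ae_restrict_mem measurableSet_Ioo] with s hs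
        exact mul_nonneg (Real.rpow_nonneg hs.1.le _) (hφ0 s ⟨hs.1.le, hs.2.le⟩)
      have htm : t ^ m ≤ T ^ m := Real.rpow_le_rpow ht.1 htT hm.le
      have hmain1 : t ^ m / m * φ t ≤ C * I + C * K * (T ^ m / m) := by
        have h1 : C * (∫ s in Ioo (0:ℝ) t, s ^ (m - 1) * φ s) ≤ C * I :=
          mul_le_mul_of_nonneg_left hIle hC.le
        have h2 : C * K * (t ^ m / m) ≤ C * K * (T ^ m / m) := by
          apply mul_le_mul_of_nonneg_left _ (mul_nonneg hC.le hK)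
          exact div_le_div_of_nonneg_right htm hm.le  -- maybe wrong name
        linarith [hL ▸ hsplit ▸ hmono]
      have hφtnn : 0 ≤ φ t := hφ0 t ht
      calc t ^ m * φ t = m * (t ^ m / m * φ t) := by field_simp
        _ ≤ m * (C * I + C * K * (T ^ m / m)) := by
            exact mul_le_mul_of_nonneg_left hmain1 hm.le
        _ = C * m * I + C * K * T ^ m := by field_simp
  -- Part 2
  have part2 : (∫ s in (0:ℝ)..T, s ^ m * D s) ≤ C * m * I + C * K * T ^ m := by
    set f : ℝ → ℝ → ℝ := fun s τ => if s < τ then m * s ^ (m - 1) * D τ else 0 with hf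
    have hDT : IntegrableOn D (Ioc 0 T) := hDint.mono_set Ioc_subset_Icc_self
    have hfint : Integrable (Function.uncurry f)
        ((volume.restrict (Ioc (0:ℝ) T)).prod (volume.restrict (Ioc (0:ℝ) T))) := by
      have he : Function.uncurry f = Set.indicator {p : ℝ × ℝ | p.1 < p.2}
          (fun p => (m * p.1 ^ (m - 1)) * D p.2) := by
        funext p
        by_cases h : p.1 < p.2 <;>
          simp [Function.uncurry, hf, Set.indicator_apply, Set.mem_setOf_eq, h]
      rw [he]
      exact ((hsm.1.const_mul m).mul_prod hDT).indicator
        (measurableSet_lt measurable_fst measurable_snd)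
    have hswap := MeasureTheory.integral_integral_swap hfint
    have hR : (∫ τ in Ioc (0:ℝ) T, ∫ s in Ioc (0:ℝ) T, f s τ)
        = ∫ τ in Ioc (0:ℝ) T, τ ^ m * D τ := by
      refine setIntegral_congr_fun measurableSet_Ioc fun τ hτ => ?_
      have h1 : (fun s => f s τ) = Set.indicator (Iio τ) (fun s => m * s ^ (m - 1) * D τ) := by
        funext s
        by_cases h : s < τ <;> simp [hf, Set.indicator_apply, mem_Iio, h]
      rw [h1, MeasureTheory.integral_indicator measurableSet_Iio,
        Measure.restrict_restrict measurableSet_Iio]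
      have h2 : Iio τ ∩ Ioc (0:ℝ) T = Ioo 0 τ := by
        ext u
        simp only [mem_inter_iff, mem_Iio, mem_Ioc, mem_Ioo]
        constructor
        · rintro ⟨h, h', _⟩; exact ⟨h', h⟩
        · rintro ⟨h, h'⟩; exact ⟨h', h, le_trans h'.le hτ.2⟩
      have h3 : (fun s : ℝ => m * s ^ (m - 1) * D τ)
          = fun s : ℝ => s ^ (m - 1) * (m * D τ) := by funext s; ring
      rw [h2, h3, MeasureTheory.integral_mul_const, aux_Ioo_rpow m hm hτ.1.le]
      field_simp
    have hLbound : (∫ s in Ioc (0:ℝ) T, ∫ τ in Ioc (0:ℝ) T, f s τ)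
        ≤ ∫ s in Ioc (0:ℝ) T, m * s ^ (m - 1) * (C * (φ s + K)) := by
      have hgint : IntervalIntegrable (fun s => m * s ^ (m - 1) * (C * (φ s + K))) volume 0 T :=
        (hsm.const_mul m).mul_continuousOn
          (continuousOn_const.mul ((huIcc ▸ hφc).add continuousOn_const))
      refine setIntegral_mono_on hfint.integral_prod_left hgint.1 measurableSet_Ioc ?_
      intro s hs
      have h1 : (fun τ => f s τ) = Set.indicator (Ioi s) (fun τ => m * s ^ (m - 1) * D τ) := by
        funext τ
        by_cases h : s < τ <;> simp [hf, Set.indicator_apply, mem_Ioi, h]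
      have h2 : Ioi s ∩ Ioc (0:ℝ) T = Ioc s T := by
        ext u
        simp only [mem_inter_iff, mem_Ioi, mem_Ioc]
        constructor
        · rintro ⟨h, _, h'⟩; exact ⟨h, h'⟩
        · rintro ⟨h, h'⟩; exact ⟨h, lt_trans hs.1 h, h'⟩
      have hcomp : (∫ τ in Ioc (0:ℝ) T, f s τ)
          = m * s ^ (m - 1) * ∫ τ in Ioc s T, D τ := by
        rw [h1, MeasureTheory.integral_indicator measurableSet_Ioi,
          Measure.restrict_restrict measurableSet_Ioi, h2, MeasureTheory.integral_const_mul]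
      rw [hcomp]
      have hnn : 0 ≤ m * s ^ (m - 1) := mul_nonneg hm.le (Real.rpow_nonneg hs.1.le _)
      refine mul_le_mul_of_nonneg_left ?_ hnn
      rcases eq_or_lt_of_le hs.2 with hsT | hsT
      · rw [hsT]
        simp only [Ioc_self, Measure.restrict_empty, MeasureTheory.integral_zero_measure]
        have hφs := hφ0 T ⟨hT0, le_rfl⟩
        exact mul_nonneg hC.le (by linarith)
      · have h := hmain s T hs.1.le hsT le_rfl
        have hφT : 0 ≤ φ T := hφ0 T ⟨hT0, le_rfl⟩
        rw [← integral_of_le hs.2]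
        linarith
    have hhval : (∫ s in Ioc (0:ℝ) T, m * s ^ (m - 1) * (C * (φ s + K)))
        = C * m * I + C * K * T ^ m := by
      have he : (fun s : ℝ => m * s ^ (m - 1) * (C * (φ s + K)))
          = fun s : ℝ => (C * m) * (s ^ (m - 1) * φ s) + (C * K * m) * s ^ (m - 1) := by
        funext s; ring
      rw [he, MeasureTheory.integral_add (hφI.1.const_mul _) (hsm.1.const_mul _),
        MeasureTheory.integral_const_mul, MeasureTheory.integral_const_mul,
        MeasureTheory.integral_Ioc_eq_integral_Ioo, MeasureTheory.integral_Ioc_eq_integral_Ioo,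
        hIoo, aux_Ioo_rpow m hm hT0]
      field_simp
    calc (∫ s in (0:ℝ)..T, s ^ m * D s) = ∫ τ in Ioc (0:ℝ) T, τ ^ m * D τ :=
          integral_of_le hT0
      _ = ∫ τ in Ioc (0:ℝ) T, ∫ s in Ioc (0:ℝ) T, f s τ := hR.symm
      _ = ∫ s in Ioc (0:ℝ) T, ∫ τ in Ioc (0:ℝ) T, f s τ := hswap.symm
      _ ≤ ∫ s in Ioc (0:ℝ) T, m * s ^ (m - 1) * (C * (φ s + K)) := hLbound
      _ = C * m * I + C * K * T ^ m := hhval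
  exact ⟨fun t ht => hfin _ (part1 t ht), hfin _ part2⟩
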